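/- Let O be a positivity-preserving linear superoperator on operators of a finite-dimensional Hilbert space, P an orthogonal projection, and P(·) = P(·)P the associated projection superoperator. Then P∘O∘P = O∘P (as superoperators) if and only if the support of O(P) is contained in the range of P. -/

import Mathlib

open Finset Matrix ComplexOrder

/-- Every Hermitian matrix is dominated by a nonnegative multiple of the identity. -/
lemma aux_shift {m : ℕ} (H : Matrix (Fin m) (Fin m) ℂ) (hH : H.IsHermitian) :
    ∃ c : ℝ, 0 ≤ c ∧ (((c : ℂ) • 1 - H)).PosSemidef := by
  classical
  set c : ℝ := ∑ i, |hH.eigenvalues i| with hc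
  refine ⟨c, Finset.sum_nonneg (fun i _ => abs_nonneg _), ?_⟩
  set U : Matrix (Fin m) (Fin m) ℂ := (hH.eigenvectorUnitary : Matrix (Fin m) (Fin m) ℂ)
  have hU : U * star U = 1 := Matrix.mem_unitaryGroup_iff.mp hH.eigenvectorUnitary.2
  set D : Matrix (Fin m) (Fin m) ℂ := diagonal (RCLike.ofReal ∘ hH.eigenvalues)
  have key : (c : ℂ) • 1 - H = U * ((c : ℂ) • 1 - D) * star U := by
    rw [mul_sub, sub_mul, mul_smul_comm, mul_one, smul_mul_assoc, hU, hH.spectral_theorem, Unitary.conjStarAlgAut_apply]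
  rw [key]
  have hdiag : ((c : ℂ) • 1 - D).PosSemidef := by
    have : (c : ℂ) • (1 : Matrix (Fin m) (Fin m) ℂ) - D
        = diagonal (fun i => ((c - hH.eigenvalues i : ℝ) : ℂ)) := by
      ext i j
      by_cases h : i = j
      · subst h
        simp [D, Matrix.one_apply, Matrix.diagonal_apply]
      · simp [D, Matrix.one_apply_ne h, Matrix.diagonal_apply_ne _ h]
    rw [this]
    refine posSemidef_diagonal_iff.mpr fun i => ?_
    rw [Complex.zero_le_real, sub_nonneg, hc]
    exact le_trans (le_abs_self _) (Finset.single_le_sum (f := fun i => |hH.eigenvalues i|)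
      (fun i _ => abs_nonneg _) (Finset.mem_univ i))
  have := hdiag.mul_mul_conjTranspose_same U
  simpa [Matrix.star_eq_conjTranspose] using this

theorem pos_superop_compression_iff_support {n : ℕ}
    (O : Matrix (Fin n) (Fin n) ℂ →ₗ[ℂ] Matrix (Fin n) (Fin n) ℂ)
    (hO : ∀ X : Matrix (Fin n) (Fin n) ℂ, X.PosSemidef → (O X).PosSemidef)
    (P : Matrix (Fin n) (Fin n) ℂ)
    (hPh : P.IsHermitian) (hPP : P * P = P) :
    (∀ X : Matrix (Fin n) (Fin n) ℂ, P * O (P * X * P) * P = O (P * X * P)) ↔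
      LinearMap.range (O P).mulVecLin ≤ LinearMap.range P.mulVecLin := by
  have hPpsd : P.PosSemidef := by
    have : P = Pᴴ * P := by rw [hPh.eq, hPP]
    rw [this]; exact posSemidef_conjTranspose_mul_self P
  constructor
  · intro h v hv
    obtain ⟨u, hu⟩ := hv
    have h1 := h 1
    rw [mul_one, hPP] at h1
    refine ⟨(O P * P) *ᵥ u, ?_⟩
    rw [mulVecLin_apply, mulVec_mulVec, ← mul_assoc, h1]
    rw [mulVecLin_apply] at hu
    exact hu
  · intro hrange
    -- P * O P = O P and O P * P = O P
    have hOPpsd : (O P).PosSemidef := hO P hPpsd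
    have hPOP : P * O P = O P := by
      have hv : ∀ v, (P * O P) *ᵥ v = O P *ᵥ v := by
        intro v
        obtain ⟨u, hu⟩ := hrange ⟨v, rfl⟩
        simp only [mulVecLin_apply] at hu
        rw [← mulVec_mulVec, ← hu, mulVec_mulVec, hPP]
      ext i j
      have := congrFun (hv (Pi.single j 1)) i
      simpa using this
    have hOPP : O P * P = O P := by
      have := congrArg conjTranspose hPOP
      rwa [conjTranspose_mul, hOPpsd.1.eq, hPh.eq] at this
    -- key: the statement for PSD X
    have key : ∀ X : Matrix (Fin n) (Fin n) ℂ, X.PosSemidef →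
        P * O (P * X * P) * P = O (P * X * P) := by
      intro X hX
      have hY : (P * X * P).PosSemidef := by
        have := hX.mul_mul_conjTranspose_same P
        rwa [hPh.eq] at this
      set A := O (P * X * P) with hA_def
      have hA : A.PosSemidef := hO _ hY
      obtain ⟨c, hc0, hcX⟩ := aux_shift X hX.1
      have h1 : ((c : ℂ) • P - P * X * P).PosSemidef := by
        have := hcX.mul_mul_conjTranspose_same P
        rw [hPh.eq] at this
        have e : P * ((c : ℂ) • 1 - X) * P = (c : ℂ) • P - P * X * P := by
          rw [mul_sub, sub_mul, mul_smul_comm, mul_one, smul_mul_assoc, hPP]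
        rwa [e] at this
      have h2 : ((c : ℂ) • O P - A).PosSemidef := by
        have := hO _ h1
        rwa [map_sub, _root_.map_smul] at this
      -- A * (1 - P) = 0
      have hAQ : A * (1 - P) = 0 := by
        have hOPQ : O P * (1 - P) = 0 := by rw [mul_sub, mul_one, hOPP, sub_self]
        have hall : ∀ v : Fin n → ℂ, (A * (1 - P)) *ᵥ v = 0 := by
          intro v
          set x := (1 - P) *ᵥ v with hx
          have hq0 : (0 : ℂ) ≤ star x ⬝ᵥ A *ᵥ x := hA.dotProduct_mulVec_nonneg x
          have hq1 : star x ⬝ᵥ A *ᵥ x ≤ 0 := by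
            have := h2.dotProduct_mulVec_nonneg x
            rw [sub_mulVec, dotProduct_sub, sub_nonneg] at this
            refine le_trans this ?_
            have : O P *ᵥ x = 0 := by
              rw [hx, mulVec_mulVec, hOPQ, zero_mulVec]
            rw [smul_mulVec, this, smul_zero, dotProduct_zero]
          have hq : star x ⬝ᵥ A *ᵥ x = 0 := le_antisymm hq1 hq0
          rw [← mulVec_mulVec, ← hx]
          exact (hA.dotProduct_mulVec_zero_iff x).mp hq
        ext i j
        have := congrFun (hall (Pi.single j 1)) i
        simpa using this
      have hAP : A * P = A := by
        have h' : A - A * P = 0 := by rw [← hAQ, mul_sub, mul_one]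
        exact (sub_eq_zero.mp h').symm
      have hPA : P * A = A := by
        have := congrArg conjTranspose hAP
        rwa [conjTranspose_mul, hA.1.eq, hPh.eq] at this
      rw [hPA, hAP]
    -- extend by linearity
    have hlin : ∀ (a : ℂ) (X Y : Matrix (Fin n) (Fin n) ℂ),
        P * O (P * X * P) * P = O (P * X * P) →
        P * O (P * Y * P) * P = O (P * Y * P) →
        P * O (P * (X + a • Y) * P) * P = O (P * (X + a • Y) * P) := by
      intro a X Y hX hY
      have e : P * (X + a • Y) * P = P * X * P + a • (P * Y * P) := by
        rw [mul_add, add_mul, mul_smul_comm, smul_mul_assoc]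
      rw [e, map_add, O.map_smul, mul_add, add_mul, mul_smul_comm, smul_mul_assoc, hX, hY]
    intro X
    -- hermitian case
    have hherm : ∀ H : Matrix (Fin n) (Fin n) ℂ, H.IsHermitian →
        P * O (P * H * P) * P = O (P * H * P) := by
      intro H hH
      obtain ⟨c, hc0, hcH⟩ := aux_shift (-H) (by simpa using hH.neg)
      have h1 : ((c : ℂ) • 1 + H).PosSemidef := by
        rwa [sub_neg_eq_add] at hcH
      have h2 : ((c : ℂ) • (1 : Matrix (Fin n) (Fin n) ℂ)).PosSemidef := by
        rw [← diagonal_one, ← diagonal_smul]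
        refine posSemidef_diagonal_iff.mpr fun i => ?_
        simpa using Complex.zero_le_real.mpr hc0
      have e : H = ((c : ℂ) • 1 + H) + (-1 : ℂ) • ((c : ℂ) • 1) := by
        simp
      rw [e]
      exact hlin _ _ _ (key _ h1) (key _ h2)
    have hH1 : ((2⁻¹ : ℂ) • (X + Xᴴ)).IsHermitian := by
      unfold Matrix.IsHermitian
      rw [conjTranspose_smul, conjTranspose_add, conjTranspose_conjTranspose]
      rw [add_comm]
      congr 1
      simp
    have hH2 : ((-(Complex.I) / 2) • (X - Xᴴ)).IsHermitian := by
      have hct : ((-(Complex.I) / 2) • (X - Xᴴ))ᴴ = star (-(Complex.I)/2) • (X - Xᴴ)ᴴ :=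
        conjTranspose_smul _ _
      rw [Matrix.IsHermitian, hct, conjTranspose_sub, conjTranspose_conjTranspose]
      rw [show star (-(Complex.I)/2) = Complex.I / 2 by simp,
        show Xᴴ - X = (-1 : ℂ) • (X - Xᴴ) by simp, smul_smul]
      congr 1
      ring
    have eX : X = (2⁻¹ : ℂ) • (X + Xᴴ) + Complex.I • ((-(Complex.I) / 2) • (X - Xᴴ)) := by
      rw [smul_smul]
      have : Complex.I * (-(Complex.I) / 2) = 2⁻¹ := by
        norm_num [Complex.ext_iff]
      rw [this, smul_add, smul_sub, ← add_sub_assoc]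
      module
    rw [eX]
    exact hlin _ _ _ (hherm _ hH1) (hherm _ hH2)
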